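/- Let R be an Ore domain with quotient field K. Suppose W is an R-module of rank 2m (i.e., dim_K(W ⊗_R K) = 2m) equipped with an R-sesquilinear form λ : W → W^* := Hom_R(W, R), and there exist elements ℓ₁,…,ℓ_m, d₁,…,d_m ∈ W with λ(ℓ_i)(ℓ_j) = 0 and λ(ℓ_i)(d_j) = δ_{ij}. Then the map W^* → (R^{2m})^* given by restriction to the submodule generated by the ℓ's and d's is surjective with torsion-free kernel; consequently W ≅ (free module of rank 2m) ⊕ T(W) where T(W) is the torsion submodule, provided λ is surjective onto W^*. -/

import Mathlib

open scoped TensorProduct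

/-- Let `R` be a domain with quotient field `K`, and `W` a finitely generated
`R`-module of rank `2m` (i.e. `dim_K (K ⊗_R W) = 2m`) with a form
`λ : W → W^* = Hom_R(W,R)` admitting a Lagrangian family `ℓ₁,…,ℓ_m` with duals
`d₁,…,d_m` (`λ(ℓᵢ)(ℓⱼ) = 0`, `λ(ℓᵢ)(dⱼ) = δᵢⱼ = λ(dᵢ)(ℓⱼ)`).  Then restriction
to the submodule generated by the `ℓ`'s and `d`'s gives a surjection
`W^* → (R^{2m})^*` whose kernel is torsion-free; consequently, if `λ` is
surjective onto `W^*`, then `W` is isomorphic to the direct sum of a free module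
of rank `2m` and its torsion submodule `T(W)`. -/
theorem stmt_11 (R : Type*) [CommRing R] [IsDomain R]
    (K : Type*) [Field K] [Algebra R K] [IsFractionRing R K]
    (W : Type*) [AddCommGroup W] [Module R W] [Module.Finite R W]
    (m : ℕ) (hrank : Module.finrank K (K ⊗[R] W) = 2 * m)
    (lam : W →ₗ[R] Module.Dual R W) (ℓ d : Fin m → W)
    (hll : ∀ i j, lam (ℓ i) (ℓ j) = 0)
    (hld : ∀ i j, lam (ℓ i) (d j) = if i = j then 1 else 0)
    (hdl : ∀ i j, lam (d i) (ℓ j) = if i = j then 1 else 0) :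
    (Function.Surjective
      (fun φ : Module.Dual R W => fun s : Fin m ⊕ Fin m => φ (Sum.elim ℓ d s))) ∧
    (∀ φ : Module.Dual R W, (∀ s : Fin m ⊕ Fin m, φ (Sum.elim ℓ d s) = 0) →
      (∃ r : R, r ≠ 0 ∧ r • φ = 0) → φ = 0) ∧
    (Function.Surjective lam →
      Nonempty (W ≃ₗ[R] ((Fin m ⊕ Fin m) → R) × ↥(Submodule.torsion R W))) := by
  classical
  set v : Fin m ⊕ Fin m → W := Sum.elim ℓ d with hv
  set e : Fin m ⊕ Fin m → Module.Dual R W :=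
    Sum.elim (fun i => lam (d i) - ∑ j, lam (d i) (d j) • lam (ℓ j))
      (fun i => lam (ℓ i)) with he_def
  have he : ∀ s t, e s (v t) = if s = t then 1 else 0 := by
    rintro (i | i) (j | j) <;>
      simp [he_def, hv, hll, hld, hdl, mul_ite, Finset.sum_ite_eq']
  -- the dual-restriction map, as a linear map
  set q : W →ₗ[R] (Fin m ⊕ Fin m → R) := LinearMap.pi (fun s => e s) with hq_def
  have hq_apply : ∀ w t, q w t = e t w := fun _ _ => rfl
  -- the section
  set ι : ((Fin m ⊕ Fin m) → R) →ₗ[R] W := Fintype.linearCombination R v with hι_def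
  have hι_apply : ∀ f : (Fin m ⊕ Fin m) → R, ι f = ∑ s, f s • v s := fun f =>
    rfl
  have hqι : ∀ f, q (ι f) = f := by
    intro f
    funext t
    rw [hq_apply, hι_apply]
    rcases t with i | i <;> simp [he, mul_ite, Finset.sum_ite_eq]
  have hq_surj : Function.Surjective q := fun f => ⟨ι f, hqι f⟩
  refine ⟨?_, ?_, ?_⟩
  · -- surjectivity of the restriction map
    intro f
    refine ⟨∑ s, f s • e s, ?_⟩
    funext t
    rcases t with i | i <;> simp [he, mul_ite, Finset.sum_ite_eq]
  · -- torsion-freeness of the kernel (indeed of all of `W^*`)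
    rintro φ - ⟨r, hr, hrφ⟩
    ext w
    have h := congrArg (fun ψ : Module.Dual R W => ψ w) hrφ
    simp only [LinearMap.smul_apply, smul_eq_mul, LinearMap.zero_apply] at h
    simpa using (mul_eq_zero.mp h).resolve_left hr
  · -- splitting off the torsion
    intro _
    set N : Submodule R W := LinearMap.ker q with hN_def
    -- rank computations
    have hWK : Module.rank R W = (2 * m : ℕ) := by
      have hbc : IsLocalizedModule (nonZeroDivisors R) (TensorProduct.mk R K W 1) :=
        (isLocalizedModule_iff_isBaseChange (nonZeroDivisors R) K _).mpr (TensorProduct.isBaseChange R W K)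
      have h1 := IsLocalizedModule.lift_rank_eq (nonZeroDivisors R) (TensorProduct.mk R K W 1) le_rfl
      rw [← IsLocalization.rank_eq K (nonZeroDivisors R) le_rfl] at h1
      have h2 : Module.rank K (K ⊗[R] W) = (2 * m : ℕ) := by
        rw [← Module.finrank_eq_rank, hrank]
      rw [h2, Cardinal.lift_natCast] at h1
      exact Cardinal.lift_eq_nat_iff.mp h1.symm
    have hquot : Module.rank R (W ⧸ N) = (2 * m : ℕ) := by
      have h3 := (q.quotKerEquivOfSurjective hq_surj).lift_rank_eq
      have hcard : Fintype.card (Fin m ⊕ Fin m) = 2 * m := by simp [Nat.two_mul]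
      rw [rank_fun', hcard, Cardinal.lift_natCast] at h3
      exact Cardinal.lift_eq_nat_iff.mp h3
    have hsum := rank_quotient_add_rank_of_isDomain N
    rw [hquot, hWK] at hsum
    have hNfin : Module.rank R N < Cardinal.aleph0 := by
      have hle : Module.rank R N ≤ (2 * m : ℕ) := by
        rw [← hsum]; exact self_le_add_left _ _
      exact hle.trans_lt (Cardinal.nat_lt_aleph0 _)
    have hN0 : Module.rank R N = 0 := by
      have := congrArg Cardinal.toNat hsum
      rw [Cardinal.toNat_add (Cardinal.nat_lt_aleph0 _) hNfin] at this
      simp only [Cardinal.toNat_natCast] at this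
      have h0 : Cardinal.toNat (Module.rank R N) = 0 := by omega
      rcases Cardinal.toNat_eq_zero.mp h0 with h | h
      · exact h
      · exact absurd h (by exact hNfin.not_ge)
    have hNtor : ∀ x : N, ∃ a : R, a ≠ 0 ∧ a • x = 0 := rank_eq_zero_iff.mp hN0
    -- N equals the torsion submodule
    have hNeq : N = Submodule.torsion R W := by
      ext x
      constructor
      · intro hx
        obtain ⟨a, ha, hax⟩ := hNtor ⟨x, hx⟩
        refine (Submodule.mem_torsion_iff x).mpr
          ⟨⟨a, mem_nonZeroDivisors_of_ne_zero ha⟩, ?_⟩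
        have : a • x = 0 := congrArg Subtype.val hax
        simpa [Submonoid.smul_def] using this
      · intro hx
        obtain ⟨a, ha⟩ := (Submodule.mem_torsion_iff x).mp hx
        have ha' : (a : R) ≠ 0 := nonZeroDivisors.coe_ne_zero a
        have hq0 : (a : R) • q x = 0 := by
          rw [← map_smul, show (a : R) • x = 0 by simpa [Submonoid.smul_def] using ha,
            map_zero]
        rw [hN_def, LinearMap.mem_ker]
        funext t
        have := congrFun hq0 t
        simp only [Pi.smul_apply, smul_eq_mul, Pi.zero_apply] at this
        exact (mul_eq_zero.mp this).resolve_left ha'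
    -- build the splitting equivalence
    have hker : ∀ w : W, w - ι (q w) ∈ N := by
      intro w
      rw [hN_def, LinearMap.mem_ker, map_sub, hqι, sub_self]
    have E1 : W ≃ₗ[R] ((Fin m ⊕ Fin m) → R) × N := by
      refine
        { toLinearMap := q.prod ((LinearMap.id - ι ∘ₗ q).codRestrict N (fun w => hker w))
          invFun := fun p => ι p.1 + (p.2 : W)
          left_inv := ?_
          right_inv := ?_ }
      · intro w
        simp
      · rintro ⟨f, x, hx⟩
        have hqx : q x = 0 := hx
        ext
        · simp [hqx, hqι]
        · simp [hqx, hqι]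
    have E2 : (((Fin m ⊕ Fin m) → R) × N) ≃ₗ[R]
        (((Fin m ⊕ Fin m) → R) × ↥(Submodule.torsion R W)) :=
      (LinearEquiv.refl R _).prodCongr (LinearEquiv.ofEq N _ hNeq)
    exact ⟨E1.trans E2⟩
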